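/- Let A be a nonempty finite alphabet, X ⊆ A^{ℤ²} a subshift, and g ≥ 8 a real number. Suppose X admits gluing along every pair (E,F) of finite subsets of ℤ² satisfying: (C1) d(E,F) > g/2 − 2; (C3) any two distinct connected components of E are at Euclidean distance ≥ g/2 − 2 from each other, and the same holds for F. Then X admits gluing along every pair (E,F) of finite subsets of ℤ² with d(E,F) > g. -/

import Mathlib

/-- Euclidean distance between two sites of `ℤ²`. -/
noncomputable def edistZ2 (u v : ℤ × ℤ) : ℝ :=
  Real.sqrt (((u.1 - v.1 : ℤ) : ℝ) ^ 2 + ((u.2 - v.2 : ℤ) : ℝ) ^ 2)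

/-- The shift `ℤ²`-action on the full shift: `(σ_v x)_u = x_{u+v}`. -/
def shiftZ2 {A : Type*} (v : ℤ × ℤ) (x : ℤ × ℤ → A) : ℤ × ℤ → A :=
  fun u => x (u + v)

/-- The product topology on the full shift `A^{ℤ²}`, with `A` discrete. -/
def fullShiftTopZ2 (A : Type*) : TopologicalSpace (ℤ × ℤ → A) :=
  @Pi.topologicalSpace (ℤ × ℤ) (fun _ => A) (fun _ => ⊥)

/-- `X` admits gluing along the pair `(E, F)`. -/
def AdmitsGluing {A : Type*} (X : Set (ℤ × ℤ → A)) (E F : Set (ℤ × ℤ)) : Prop :=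
  ∀ x ∈ X, ∀ y ∈ X, ∃ z ∈ X, (∀ u ∈ E, z u = x u) ∧ (∀ u ∈ F, z u = y u)

/-- Adjacency in the grid graph on `ℤ²`: `ℓ¹`-distance one. -/
def adjZ2 (u v : ℤ × ℤ) : Prop :=
  (u.1 - v.1).natAbs + (u.2 - v.2).natAbs = 1

/-- `b` is reachable from `a` inside `S` along grid edges. -/
def ReachIn (S : Set (ℤ × ℤ)) (a b : ℤ × ℤ) : Prop :=
  Relation.ReflTransGen (fun p q => p ∈ S ∧ q ∈ S ∧ adjZ2 p q) a b

/-- `S` is connected in the grid graph on `ℤ²`. -/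
def ConnIn (S : Set (ℤ × ℤ)) : Prop :=
  ∀ a ∈ S, ∀ b ∈ S, ReachIn S a b

/-- Any two distinct connected components of `S` are at Euclidean distance
`≥ δ`: equivalently, any two points of `S` not reachable from one another
within `S` are at distance `≥ δ`. -/
def ComponentsSeparated (S : Set (ℤ × ℤ)) (δ : ℝ) : Prop :=
  ∀ a ∈ S, ∀ b ∈ S, ¬ ReachIn S a b → edistZ2 a b ≥ δ

namespace GluingAux

noncomputable section

def ι (u : ℤ × ℤ) : ℂ := ⟨(u.1 : ℝ), (u.2 : ℝ)⟩

@[simp] lemma ι_re (u : ℤ × ℤ) : (ι u).re = (u.1 : ℝ) := rfl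
@[simp] lemma ι_im (u : ℤ × ℤ) : (ι u).im = (u.2 : ℝ) := rfl

lemma edist_eq (u v : ℤ × ℤ) : edistZ2 u v = ‖ι u - ι v‖ := by
  rw [Complex.norm_def, Complex.normSq_apply, edistZ2]
  congr 1
  push_cast
  simp [Complex.sub_re, Complex.sub_im]
  ring

@[simp] lemma edist_self (a : ℤ × ℤ) : edistZ2 a a = 0 := by
  simp [edistZ2]

lemma edist_comm (u v : ℤ × ℤ) : edistZ2 u v = edistZ2 v u := by
  rw [edistZ2, edistZ2]
  congr 1
  push_cast
  ring

lemma normSq_sub_comm (x y : ℂ) : Complex.normSq (x - y) = Complex.normSq (y - x) := by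
  rw [Complex.normSq_apply, Complex.normSq_apply]
  simp [Complex.sub_re, Complex.sub_im]
  ring

lemma normSq_gt_of_edist_gt {u v : ℤ × ℤ} {g : ℝ} (hgn : 0 ≤ g)
    (h : g < edistZ2 u v) : g ^ 2 < Complex.normSq (ι u - ι v) := by
  rw [edist_eq, Complex.norm_def] at h
  calc g ^ 2 < Real.sqrt (Complex.normSq (ι u - ι v)) ^ 2 := by
        exact pow_lt_pow_left₀ h hgn (by norm_num)
    _ = _ := Real.sq_sqrt (Complex.normSq_nonneg _)

lemma normSq_le_of_edist_le {u v : ℤ × ℤ} {g : ℝ}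
    (h : edistZ2 u v ≤ g) : Complex.normSq (ι u - ι v) ≤ g ^ 2 := by
  rw [edist_eq, Complex.norm_def] at h
  calc Complex.normSq (ι u - ι v)
      = Real.sqrt (Complex.normSq (ι u - ι v)) ^ 2 := (Real.sq_sqrt (Complex.normSq_nonneg _)).symm
    _ ≤ g ^ 2 := by
        apply pow_le_pow_left₀ (Real.sqrt_nonneg _) h

lemma edist_gt_of_normSq_gt {u v : ℤ × ℤ} {c : ℝ} (hc : 0 ≤ c)
    (h : c ^ 2 < Complex.normSq (ι u - ι v)) : c < edistZ2 u v := by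
  rw [edist_eq, Complex.norm_def]
  have := Real.sqrt_lt_sqrt (by positivity) h
  rwa [Real.sqrt_sq hc] at this

/-- Apollonius-type interpolation identity. -/
lemma apoll (f p q : ℂ) (s : ℝ) :
    Complex.normSq (f - (p + (s : ℂ) * (q - p)))
      = (1 - s) * Complex.normSq (f - p) + s * Complex.normSq (f - q)
        - s * (1 - s) * Complex.normSq (q - p) := by
  simp only [Complex.normSq_apply, Complex.add_re, Complex.add_im, Complex.sub_re,
    Complex.sub_im, Complex.mul_re, Complex.mul_im, Complex.ofReal_re, Complex.ofReal_im]
  ring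


/-- number of subdivision steps -/
def NN (a b : ℤ × ℤ) : ℕ := 2 * ((b.1 - a.1).natAbs + (b.2 - a.2).natAbs) + 1

lemma NN_pos (a b : ℤ × ℤ) : 0 < NN a b := by unfold NN; omega

/-- x coordinate of the k-th sample point on the segment -/
def sx (a b : ℤ × ℤ) (k : ℕ) : ℝ :=
  (a.1 : ℝ) + ((k : ℝ) / (NN a b : ℝ)) * ((b.1 : ℝ) - (a.1 : ℝ))

def sy (a b : ℤ × ℤ) (k : ℕ) : ℝ :=
  (a.2 : ℝ) + ((k : ℝ) / (NN a b : ℝ)) * ((b.2 : ℝ) - (a.2 : ℝ))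

/-- rounded lattice sample point -/
def pt (a b : ℤ × ℤ) (k : ℕ) : ℤ × ℤ := (⌊sx a b k + 1/2⌋, ⌊sy a b k + 1/2⌋)

def walk (a b : ℤ × ℤ) (m : ℕ) : ℤ × ℤ :=
  if m % 2 = 0 then pt a b (m / 2) else ((pt a b (m / 2 + 1)).1, (pt a b (m / 2)).2)

def StairSet (a b : ℤ × ℤ) : Set (ℤ × ℤ) := walk a b '' (Set.Iic (2 * NN a b))

lemma stair_finite (a b : ℤ × ℤ) : (StairSet a b).Finite :=
  (Set.finite_Iic (2 * NN a b)).image _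

lemma round_abs (x : ℝ) : |(⌊x + 1/2⌋ : ℝ) - x| ≤ 1/2 := by
  rw [abs_le]
  constructor
  · have := Int.lt_floor_add_one (x + 1/2)
    linarith
  · have := Int.floor_le (x + 1/2)
    linarith

lemma floor_intCast_add_half (n : ℤ) : ⌊(n : ℝ) + 1/2⌋ = n := by
  rw [Int.floor_eq_iff]
  constructor <;> norm_num

lemma sx_zero (a b : ℤ × ℤ) : sx a b 0 = (a.1 : ℝ) := by simp [sx]
lemma sy_zero (a b : ℤ × ℤ) : sy a b 0 = (a.2 : ℝ) := by simp [sy]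

lemma NN_cast_pos (a b : ℤ × ℤ) : (0 : ℝ) < (NN a b : ℝ) := by
  exact_mod_cast NN_pos a b

lemma sx_last (a b : ℤ × ℤ) : sx a b (NN a b) = (b.1 : ℝ) := by
  rw [sx, div_self (ne_of_gt (NN_cast_pos a b))]; ring
lemma sy_last (a b : ℤ × ℤ) : sy a b (NN a b) = (b.2 : ℝ) := by
  rw [sy, div_self (ne_of_gt (NN_cast_pos a b))]; ring

lemma pt_zero (a b : ℤ × ℤ) : pt a b 0 = a := by
  rw [pt, sx_zero, sy_zero, floor_intCast_add_half, floor_intCast_add_half]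

lemma pt_last (a b : ℤ × ℤ) : pt a b (NN a b) = b := by
  rw [pt, sx_last, sy_last, floor_intCast_add_half, floor_intCast_add_half]

lemma pt_near_x (a b : ℤ × ℤ) (k : ℕ) : |((pt a b k).1 : ℝ) - sx a b k| ≤ 1/2 :=
  round_abs _
lemma pt_near_y (a b : ℤ × ℤ) (k : ℕ) : |((pt a b k).2 : ℝ) - sy a b k| ≤ 1/2 :=
  round_abs _

lemma sx_step (a b : ℤ × ℤ) (k : ℕ) : |sx a b (k+1) - sx a b k| ≤ 1/2 := by
  have h : sx a b (k+1) - sx a b k = ((b.1 : ℝ) - (a.1 : ℝ)) / (NN a b : ℝ) := by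
    rw [sx, sx]; push_cast; field_simp; ring
  rw [h, abs_div, abs_of_pos (NN_cast_pos a b), div_le_iff₀ (NN_cast_pos a b)]
  have h1 : |(b.1 : ℝ) - (a.1 : ℝ)| = ((b.1 - a.1).natAbs : ℝ) := by
    rw [Nat.cast_natAbs]; push_cast; ring_nf
  rw [h1]
  have h2 : (2 : ℝ) * ((b.1 - a.1).natAbs : ℝ) + 1 ≤ (NN a b : ℝ) := by
    rw [NN]; push_cast; linarith [Nat.cast_nonneg (α := ℝ) ((b.2 - a.2).natAbs)]
  linarith

lemma sy_step (a b : ℤ × ℤ) (k : ℕ) : |sy a b (k+1) - sy a b k| ≤ 1/2 := by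
  have h : sy a b (k+1) - sy a b k = ((b.2 : ℝ) - (a.2 : ℝ)) / (NN a b : ℝ) := by
    rw [sy, sy]; push_cast; field_simp; ring
  rw [h, abs_div, abs_of_pos (NN_cast_pos a b), div_le_iff₀ (NN_cast_pos a b)]
  have h1 : |(b.2 : ℝ) - (a.2 : ℝ)| = ((b.2 - a.2).natAbs : ℝ) := by
    rw [Nat.cast_natAbs]; push_cast; ring_nf
  rw [h1]
  have h2 : (2 : ℝ) * ((b.2 - a.2).natAbs : ℝ) + 1 ≤ (NN a b : ℝ) := by
    rw [NN]; push_cast; linarith [Nat.cast_nonneg (α := ℝ) ((b.1 - a.1).natAbs)]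
  linarith

lemma int_natAbs_le_one {m : ℤ} (h : |(m : ℝ)| ≤ 3/2) : m.natAbs ≤ 1 := by
  by_contra hc
  push_neg at hc
  have h2 : (2 : ℕ) ≤ m.natAbs := hc
  have h3 : (2 : ℤ) ≤ |m| := by rw [Int.abs_eq_natAbs]; exact_mod_cast h2
  have : (2 : ℝ) ≤ |(m : ℝ)| := by
    rw [← Int.cast_abs]
    exact_mod_cast h3
  linarith

lemma pt_step_x (a b : ℤ × ℤ) (k : ℕ) :
    ((pt a b (k+1)).1 - (pt a b k).1).natAbs ≤ 1 := by
  apply int_natAbs_le_one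
  push_cast
  have h1 := pt_near_x a b (k+1)
  have h2 := pt_near_x a b k
  have h3 := sx_step a b k
  calc |((pt a b (k+1)).1 : ℝ) - ((pt a b k).1 : ℝ)|
      ≤ |((pt a b (k+1)).1 : ℝ) - sx a b (k+1)| + |sx a b (k+1) - sx a b k|
          + |((pt a b k).1 : ℝ) - sx a b k| := by
        rw [show ((pt a b (k+1)).1 : ℝ) - ((pt a b k).1 : ℝ)
          = (((pt a b (k+1)).1 : ℝ) - sx a b (k+1)) + (sx a b (k+1) - sx a b k)
            - (((pt a b k).1 : ℝ) - sx a b k) by ring]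
        calc _ ≤ |(((pt a b (k+1)).1 : ℝ) - sx a b (k+1)) + (sx a b (k+1) - sx a b k)|
              + |((pt a b k).1 : ℝ) - sx a b k| := abs_sub _ _
          _ ≤ _ := by
              have := abs_add_le (((pt a b (k+1)).1 : ℝ) - sx a b (k+1)) (sx a b (k+1) - sx a b k)
              linarith
    _ ≤ 3/2 := by linarith

lemma pt_step_y (a b : ℤ × ℤ) (k : ℕ) :
    ((pt a b (k+1)).2 - (pt a b k).2).natAbs ≤ 1 := by
  apply int_natAbs_le_one
  push_cast
  have h1 := pt_near_y a b (k+1)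
  have h2 := pt_near_y a b k
  have h3 := sy_step a b k
  calc |((pt a b (k+1)).2 : ℝ) - ((pt a b k).2 : ℝ)|
      ≤ |((pt a b (k+1)).2 : ℝ) - sy a b (k+1)| + |sy a b (k+1) - sy a b k|
          + |((pt a b k).2 : ℝ) - sy a b k| := by
        rw [show ((pt a b (k+1)).2 : ℝ) - ((pt a b k).2 : ℝ)
          = (((pt a b (k+1)).2 : ℝ) - sy a b (k+1)) + (sy a b (k+1) - sy a b k)
            - (((pt a b k).2 : ℝ) - sy a b k) by ring]
        calc _ ≤ |(((pt a b (k+1)).2 : ℝ) - sy a b (k+1)) + (sy a b (k+1) - sy a b k)|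
              + |((pt a b k).2 : ℝ) - sy a b k| := abs_sub _ _
          _ ≤ _ := by
              have := abs_add_le (((pt a b (k+1)).2 : ℝ) - sy a b (k+1)) (sy a b (k+1) - sy a b k)
              linarith
    _ ≤ 3/2 := by linarith


lemma walk_even (a b : ℤ × ℤ) (k : ℕ) : walk a b (2 * k) = pt a b k := by
  have h1 : (2 * k) % 2 = 0 := by omega
  have h2 : (2 * k) / 2 = k := by omega
  rw [walk, if_pos h1, h2]

lemma walk_odd (a b : ℤ × ℤ) (k : ℕ) :
    walk a b (2 * k + 1) = ((pt a b (k + 1)).1, (pt a b k).2) := by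
  have h1 : ¬ ((2 * k + 1) % 2 = 0) := by omega
  have h2 : (2 * k + 1) / 2 = k := by omega
  rw [walk, if_neg h1, h2]

lemma walk_zero (a b : ℤ × ℤ) : walk a b 0 = a := by
  have := walk_even a b 0
  simpa [pt_zero] using this

lemma walk_last (a b : ℤ × ℤ) : walk a b (2 * NN a b) = b := by
  rw [walk_even, pt_last]

/-- consecutive walk points are equal or adjacent -/
lemma walk_step (a b : ℤ × ℤ) (m : ℕ) :
    ((walk a b (m+1)).1 - (walk a b m).1).natAbs
      + ((walk a b (m+1)).2 - (walk a b m).2).natAbs ≤ 1 := by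
  rcases Nat.even_or_odd m with ⟨k, hk⟩ | ⟨k, hk⟩
  · subst hk
    rw [show (k + k) = 2 * k by ring, show 2 * k + 1 = 2 * k + 1 from rfl,
      walk_even, walk_odd]
    simpa using pt_step_x a b k
  · subst hk
    rw [show (2 * k + 1 + 1) = 2 * (k + 1) by ring, walk_odd, walk_even]
    simpa using pt_step_y a b k

lemma mem_stair (a b : ℤ × ℤ) {m : ℕ} (hm : m ≤ 2 * NN a b) :
    walk a b m ∈ StairSet a b := ⟨m, hm, rfl⟩

lemma a_mem_stair (a b : ℤ × ℤ) : a ∈ StairSet a b := by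
  have := mem_stair a b (m := 0) (by omega)
  rwa [walk_zero] at this

lemma adj_symm {u v : ℤ × ℤ} (h : adjZ2 u v) : adjZ2 v u := by
  unfold adjZ2 at *
  omega

lemma reach_symm {S : Set (ℤ × ℤ)} {u v : ℤ × ℤ} (h : ReachIn S u v) : ReachIn S v u := by
  induction h with
  | refl => exact Relation.ReflTransGen.refl
  | tail hr hstep ih =>
      rcases hstep with ⟨h1, h2, h3⟩
      exact Relation.ReflTransGen.trans (Relation.ReflTransGen.single ⟨h2, h1, adj_symm h3⟩) ih

lemma reach_step {S : Set (ℤ × ℤ)} {u v : ℤ × ℤ} (hu : u ∈ S) (hv : v ∈ S)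
    (h : (v.1 - u.1).natAbs + (v.2 - u.2).natAbs ≤ 1) : ReachIn S u v := by
  rcases Nat.lt_or_ge ((v.1 - u.1).natAbs + (v.2 - u.2).natAbs) 1 with h0 | h1
  · have he : u = v := by
      have e1 : v.1 = u.1 := by omega
      have e2 : v.2 = u.2 := by omega
      exact (Prod.ext e1 e2).symm
    rw [he]
    exact Relation.ReflTransGen.refl
  · exact Relation.ReflTransGen.single ⟨hu, hv, by unfold adjZ2; omega⟩

lemma reach_walk {S : Set (ℤ × ℤ)} (a b : ℤ × ℤ) (hsub : StairSet a b ⊆ S) :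
    ∀ m, m ≤ 2 * NN a b → ReachIn S a (walk a b m) := by
  intro m
  induction m with
  | zero =>
      intro _
      rw [walk_zero]
      exact Relation.ReflTransGen.refl
  | succ n ih =>
      intro hm
      have hn : n ≤ 2 * NN a b := by omega
      refine Relation.ReflTransGen.trans (ih hn) ?_
      apply reach_step (hsub (mem_stair a b hn)) (hsub (mem_stair a b hm))
      exact walk_step a b n

lemma reach_stair_endpoints {S : Set (ℤ × ℤ)} (a b : ℤ × ℤ) (hsub : StairSet a b ⊆ S) :
    ReachIn S a b := by
  have := reach_walk a b hsub (2 * NN a b) le_rfl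
  rwa [walk_last] at this

lemma reach_stair_point {S : Set (ℤ × ℤ)} (a b : ℤ × ℤ) (hsub : StairSet a b ⊆ S)
    {p : ℤ × ℤ} (hp : p ∈ StairSet a b) : ReachIn S a p := by
  rcases hp with ⟨m, hm, rfl⟩
  exact reach_walk a b hsub m hm

-- ===== geometry =====

lemma sq_le_of_abs_le {d c : ℝ} (h : |d| ≤ c) : d ^ 2 ≤ c ^ 2 := by
  have h0 : 0 ≤ |d| := abs_nonneg d
  calc d ^ 2 = |d| ^ 2 := (sq_abs d).symm
    _ ≤ c ^ 2 := by exact pow_le_pow_left₀ h0 h 2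

def segC (a b : ℤ × ℤ) (t : ℝ) : ℂ := ι a + (t : ℂ) * (ι b - ι a)

lemma normSq_seg (u a b : ℤ × ℤ) (t : ℝ) :
    Complex.normSq (ι u - segC a b t)
      = ((u.1 : ℝ) - ((a.1 : ℝ) + t * ((b.1 : ℝ) - (a.1 : ℝ)))) ^ 2
        + ((u.2 : ℝ) - ((a.2 : ℝ) + t * ((b.2 : ℝ) - (a.2 : ℝ)))) ^ 2 := by
  simp only [segC, Complex.normSq_apply, Complex.sub_re, Complex.sub_im, Complex.add_re,
    Complex.add_im, Complex.mul_re, Complex.mul_im, Complex.ofReal_re, Complex.ofReal_im,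
    ι_re, ι_im]
  ring

lemma walk_near (a b : ℤ × ℤ) {m : ℕ} (hm : m ≤ 2 * NN a b) :
    ∃ t : ℝ, 0 ≤ t ∧ t ≤ 1 ∧ Complex.normSq (ι (walk a b m) - segC a b t) ≤ 5/4 := by
  rcases Nat.even_or_odd m with ⟨k, hk⟩ | ⟨k, hk⟩
  · -- even : m = 2k
    have hk' : m = 2 * k := by omega
    subst hk'
    have hkN : k ≤ NN a b := by omega
    refine ⟨(k : ℝ) / (NN a b : ℝ), by positivity, ?_, ?_⟩
    · rw [div_le_one (NN_cast_pos a b)]; exact_mod_cast hkN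
    · rw [walk_even, normSq_seg]
      have hx := pt_near_x a b k
      have hy := pt_near_y a b k
      have ex : ((pt a b k).1 : ℝ) - ((a.1 : ℝ) + ((k : ℝ)/(NN a b : ℝ)) * ((b.1:ℝ) - (a.1:ℝ)))
          = ((pt a b k).1 : ℝ) - sx a b k := by rw [sx]
      have ey : ((pt a b k).2 : ℝ) - ((a.2 : ℝ) + ((k : ℝ)/(NN a b : ℝ)) * ((b.2:ℝ) - (a.2:ℝ)))
          = ((pt a b k).2 : ℝ) - sy a b k := by rw [sy]
      rw [ex, ey]
      have q1 : (((pt a b k).1 : ℝ) - sx a b k) ^ 2 ≤ (1/2) ^ 2 := sq_le_of_abs_le hx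
      have q2 : (((pt a b k).2 : ℝ) - sy a b k) ^ 2 ≤ (1/2) ^ 2 := sq_le_of_abs_le hy
      nlinarith [q1, q2]
  · -- odd : m = 2k+1
    subst hk
    have hkN : k + 1 ≤ NN a b := by omega
    refine ⟨(k : ℝ) / (NN a b : ℝ), by positivity, ?_, ?_⟩
    · rw [div_le_one (NN_cast_pos a b)]
      have : (k : ℝ) ≤ (NN a b : ℝ) := by exact_mod_cast Nat.le_of_succ_le hkN
      linarith
    · rw [walk_odd, normSq_seg]
      have hx1 := pt_near_x a b (k+1)
      have hxs := sx_step a b k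
      have hy := pt_near_y a b k
      have ex : ((a.1 : ℝ) + ((k : ℝ)/(NN a b : ℝ)) * ((b.1:ℝ) - (a.1:ℝ))) = sx a b k := by
        rw [sx]
      have ey : ((a.2 : ℝ) + ((k : ℝ)/(NN a b : ℝ)) * ((b.2:ℝ) - (a.2:ℝ))) = sy a b k := by
        rw [sy]
      simp only [ex, ey]
      have habs : |((pt a b (k+1)).1 : ℝ) - sx a b k| ≤ 1 := by
        have : ((pt a b (k+1)).1 : ℝ) - sx a b k
            = (((pt a b (k+1)).1 : ℝ) - sx a b (k+1)) + (sx a b (k+1) - sx a b k) := by ring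
        rw [this]
        have := abs_add_le (((pt a b (k+1)).1 : ℝ) - sx a b (k+1)) (sx a b (k+1) - sx a b k)
        linarith
      have q1 : (((pt a b (k+1)).1 : ℝ) - sx a b k) ^ 2 ≤ 1 ^ 2 := sq_le_of_abs_le habs
      have q2 : (((pt a b k).2 : ℝ) - sy a b k) ^ 2 ≤ (1/2) ^ 2 := sq_le_of_abs_le hy
      nlinarith [q1, q2]

lemma apoll_bound (f p q : ℂ) (s : ℝ) (hs0 : 0 ≤ s) (hs1 : s ≤ 1)
    {K M : ℝ} (hX : K ≤ Complex.normSq (f - p)) (hY : K ≤ Complex.normSq (f - q))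
    (hZ : Complex.normSq (q - p) ≤ M) (hM : 0 ≤ M) :
    K - M / 4 ≤ Complex.normSq (f - (p + (s : ℂ) * (q - p))) := by
  rw [apoll]
  set X := Complex.normSq (f - p) with hXdef
  set Y := Complex.normSq (f - q) with hYdef
  set Z := Complex.normSq (q - p) with hZdef
  have e1 : (1 - s) * K ≤ (1 - s) * X := mul_le_mul_of_nonneg_left hX (by linarith)
  have e2 : s * K ≤ s * Y := mul_le_mul_of_nonneg_left hY hs0
  have e3 : s * (1 - s) * Z ≤ s * (1 - s) * M :=
    mul_le_mul_of_nonneg_left hZ (mul_nonneg hs0 (by linarith))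
  have e4 : s * (1 - s) * M ≤ (1 / 4) * M := by nlinarith [sq_nonneg (2 * s - 1)]
  linarith

lemma segC_eq (a b : ℤ × ℤ) (t : ℝ) : segC a b t = ι a + (t : ℂ) * (ι b - ι a) := rfl

lemma far_stairs {g : ℝ} (hg : 8 ≤ g) {a b c d p q : ℤ × ℤ}
    (hab : edistZ2 a b ≤ g) (hcd : edistZ2 c d ≤ g)
    (hac : g < edistZ2 a c) (had : g < edistZ2 a d)
    (hbc : g < edistZ2 b c) (hbd : g < edistZ2 b d)
    (hp : p ∈ StairSet a b) (hq : q ∈ StairSet c d) :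
    g / 2 - 2 < edistZ2 p q := by
  have hg0 : (0 : ℝ) ≤ g := by linarith
  obtain ⟨mp, hmp, rfl⟩ := hp
  obtain ⟨mq, hmq, rfl⟩ := hq
  obtain ⟨s, hs0, hs1, hps⟩ := walk_near a b hmp
  obtain ⟨t, ht0, ht1, hqt⟩ := walk_near c d hmq
  set p := walk a b mp with hpdef
  set q := walk c d mq with hqdef
  set z := segC a b s with hzdef
  set w := segC c d t with hwdef
  -- cross bounds
  have hca : g ^ 2 ≤ Complex.normSq (ι c - ι a) := by
    rw [normSq_sub_comm]; exact le_of_lt (normSq_gt_of_edist_gt hg0 hac)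
  have hcb : g ^ 2 ≤ Complex.normSq (ι c - ι b) := by
    rw [normSq_sub_comm]; exact le_of_lt (normSq_gt_of_edist_gt hg0 hbc)
  have hda : g ^ 2 ≤ Complex.normSq (ι d - ι a) := by
    rw [normSq_sub_comm]; exact le_of_lt (normSq_gt_of_edist_gt hg0 had)
  have hdb : g ^ 2 ≤ Complex.normSq (ι d - ι b) := by
    rw [normSq_sub_comm]; exact le_of_lt (normSq_gt_of_edist_gt hg0 hbd)
  have hba : Complex.normSq (ι b - ι a) ≤ g ^ 2 := by
    rw [normSq_sub_comm]; exact normSq_le_of_edist_le hab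
  have hdc : Complex.normSq (ι d - ι c) ≤ g ^ 2 := by
    rw [normSq_sub_comm]; exact normSq_le_of_edist_le hcd
  have hM : (0 : ℝ) ≤ g ^ 2 := by positivity
  have hA1 : g ^ 2 - g ^ 2 / 4 ≤ Complex.normSq (ι c - z) := by
    rw [hzdef, segC_eq]
    exact apoll_bound (ι c) (ι a) (ι b) s hs0 hs1 hca hcb hba hM
  have hA2 : g ^ 2 - g ^ 2 / 4 ≤ Complex.normSq (ι d - z) := by
    rw [hzdef, segC_eq]
    exact apoll_bound (ι d) (ι a) (ι b) s hs0 hs1 hda hdb hba hM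
  have hB : (g ^ 2 - g ^ 2 / 4) - g ^ 2 / 4 ≤ Complex.normSq (z - w) := by
    rw [hwdef, segC_eq]
    refine apoll_bound z (ι c) (ι d) t ht0 ht1 ?_ ?_ hdc hM
    · rw [normSq_sub_comm]; exact hA1
    · rw [normSq_sub_comm]; exact hA2
  -- convert to distances
  have hd1 : dist z (ι p) ≤ 9 / 8 := by
    rw [Complex.dist_eq, Complex.norm_def]
    have hle : Complex.normSq (z - ι p) ≤ (9 / 8 : ℝ) ^ 2 := by
      rw [normSq_sub_comm]; nlinarith [hps]
    calc Real.sqrt (Complex.normSq (z - ι p)) ≤ Real.sqrt ((9 / 8 : ℝ) ^ 2) :=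
          Real.sqrt_le_sqrt hle
      _ = 9 / 8 := Real.sqrt_sq (by norm_num)
  have hd2 : dist (ι q) w ≤ 9 / 8 := by
    rw [Complex.dist_eq, Complex.norm_def]
    have hle : Complex.normSq (ι q - w) ≤ (9 / 8 : ℝ) ^ 2 := by nlinarith [hqt]
    calc Real.sqrt (Complex.normSq (ι q - w)) ≤ Real.sqrt ((9 / 8 : ℝ) ^ 2) :=
          Real.sqrt_le_sqrt hle
      _ = 9 / 8 := Real.sqrt_sq (by norm_num)
  have hzw : 12 / 17 * g ≤ dist z w := by
    rw [Complex.dist_eq, Complex.norm_def]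
    have h2 : (12 / 17 * g) ^ 2 ≤ Complex.normSq (z - w) := by nlinarith [hB, sq_nonneg g]
    calc 12 / 17 * g = Real.sqrt ((12 / 17 * g) ^ 2) := (Real.sqrt_sq (by linarith)).symm
      _ ≤ Real.sqrt (Complex.normSq (z - w)) := Real.sqrt_le_sqrt h2
  have htri := dist_triangle4 z (ι p) (ι q) w
  have hepq : edistZ2 p q = dist (ι p) (ι q) := by rw [edist_eq, Complex.dist_eq]
  rw [hepq]
  have hzw' : dist z w ≤ dist z (ι p) + dist (ι p) (ι q) + dist (ι q) w := htri
  linarith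

-- ===== clusters and fattened sets =====

def CloseRel (W : Set (ℤ × ℤ)) (g : ℝ) : ℤ × ℤ → ℤ × ℤ → Prop :=
  fun u v => u ∈ W ∧ v ∈ W ∧ edistZ2 u v ≤ g

def Fat (W : Set (ℤ × ℤ)) (g : ℝ) : Set (ℤ × ℤ) :=
  {p | ∃ x y : ℤ × ℤ, x ∈ W ∧ y ∈ W ∧ edistZ2 x y ≤ g ∧ p ∈ StairSet x y}

lemma subset_fat {W : Set (ℤ × ℤ)} {g : ℝ} (hg : 0 ≤ g) : W ⊆ Fat W g := by
  intro a ha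
  exact ⟨a, a, ha, ha, by simpa using hg, a_mem_stair a a⟩

lemma fat_finite {W : Set (ℤ × ℤ)} (hW : W.Finite) (g : ℝ) : (Fat W g).Finite := by
  apply Set.Finite.subset (Set.Finite.biUnion (hW.prod hW)
    (fun i _ => stair_finite i.1 i.2))
  rintro p ⟨x, y, hx, hy, _, hp⟩
  exact Set.mem_biUnion (Set.mk_mem_prod hx hy) hp

lemma stair_subset_fat {W : Set (ℤ × ℤ)} {g : ℝ} {x y : ℤ × ℤ}
    (hx : x ∈ W) (hy : y ∈ W) (hxy : edistZ2 x y ≤ g) : StairSet x y ⊆ Fat W g :=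
  fun r hr => ⟨x, y, hx, hy, hxy, hr⟩

lemma reach_fat_of_closerel {W : Set (ℤ × ℤ)} {g : ℝ} {u v : ℤ × ℤ}
    (h : Relation.ReflTransGen (CloseRel W g) u v) : ReachIn (Fat W g) u v := by
  induction h with
  | refl => exact Relation.ReflTransGen.refl
  | tail hr hstep ih =>
      rcases hstep with ⟨h1, h2, h3⟩
      exact Relation.ReflTransGen.trans ih
        (reach_stair_endpoints _ _ (stair_subset_fat h1 h2 h3))

lemma sep_fat (W : Set (ℤ × ℤ)) {g : ℝ} (hg : 8 ≤ g) :
    ComponentsSeparated (Fat W g) (g / 2 - 2) := by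
  intro p hp q hq hnr
  obtain ⟨a, b, ha, hb, hab, hpS⟩ := hp
  obtain ⟨c, d, hc, hd, hcd, hqS⟩ := hq
  have hsubab : StairSet a b ⊆ Fat W g := stair_subset_fat ha hb hab
  have hsubcd : StairSet c d ⊆ Fat W g := stair_subset_fat hc hd hcd
  by_cases hcon : Relation.ReflTransGen (CloseRel W g) a c
  · exfalso
    apply hnr
    have r1 : ReachIn (Fat W g) a p := reach_stair_point a b hsubab hpS
    have r2 : ReachIn (Fat W g) a c := reach_fat_of_closerel hcon
    have r3 : ReachIn (Fat W g) c q := reach_stair_point c d hsubcd hqS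
    exact Relation.ReflTransGen.trans (reach_symm r1) (Relation.ReflTransGen.trans r2 r3)
  · have hac : g < edistZ2 a c := by
      by_contra hle
      push_neg at hle
      exact hcon (Relation.ReflTransGen.single ⟨ha, hc, hle⟩)
    have had : g < edistZ2 a d := by
      by_contra hle
      push_neg at hle
      refine hcon (Relation.ReflTransGen.trans
        (Relation.ReflTransGen.single ⟨ha, hd, hle⟩)
        (Relation.ReflTransGen.single ⟨hd, hc, ?_⟩))
      rw [edist_comm]; exact hcd
    have hbc : g < edistZ2 b c := by
      by_contra hle
      push_neg at hle
      exact hcon (Relation.ReflTransGen.trans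
        (Relation.ReflTransGen.single ⟨ha, hb, hab⟩)
        (Relation.ReflTransGen.single ⟨hb, hc, hle⟩))
    have hbd : g < edistZ2 b d := by
      by_contra hle
      push_neg at hle
      refine hcon (Relation.ReflTransGen.trans
        (Relation.ReflTransGen.trans
          (Relation.ReflTransGen.single ⟨ha, hb, hab⟩)
          (Relation.ReflTransGen.single ⟨hb, hd, hle⟩))
        (Relation.ReflTransGen.single ⟨hd, hc, ?_⟩))
      rw [edist_comm]; exact hcd
    exact le_of_lt (far_stairs hg hab hcd hac had hbc hbd hpS hqS)

lemma fat_apart {W V : Set (ℤ × ℤ)} {g : ℝ} (hg : 8 ≤ g)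
    (hWV : ∀ u ∈ W, ∀ v ∈ V, edistZ2 u v > g) :
    ∀ p ∈ Fat W g, ∀ q ∈ Fat V g, edistZ2 p q > g / 2 - 2 := by
  rintro p ⟨a, b, ha, hb, hab, hpS⟩ q ⟨c, d, hc, hd, hcd, hqS⟩
  exact far_stairs hg hab hcd (hWV a ha c hc) (hWV a ha d hd)
    (hWV b hb c hc) (hWV b hb d hd) hpS hqS

end
end GluingAux

/-- Reduction (B) ⇐ (C): if a subshift `X ⊆ A^{ℤ²}` admits gluing along every
pair of finite sets `(E,F)` with `d(E,F) > g/2 − 2` whose connected components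
(in each of `E` and `F` separately) are pairwise `(g/2 − 2)`-separated, then
`X` admits gluing along every pair of finite sets at distance `> g`. -/
theorem gluing_finite_of_gluing_separated_components
    {A : Type*} [Fintype A] [Nonempty A]
    (X : Set (ℤ × ℤ → A)) (g : ℝ) (hg : 8 ≤ g)
    (hne : X.Nonempty)
    (hclosed : @IsClosed _ (fullShiftTopZ2 A) X)
    (hinv : ∀ v : ℤ × ℤ, ∀ x ∈ X, shiftZ2 v x ∈ X)
    (hyp : ∀ E F : Set (ℤ × ℤ), E.Finite → F.Finite →
      (∀ u ∈ E, ∀ v ∈ F, edistZ2 u v > g / 2 - 2) →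
      ComponentsSeparated E (g / 2 - 2) →
      ComponentsSeparated F (g / 2 - 2) →
      AdmitsGluing X E F) :
    ∀ E F : Set (ℤ × ℤ), E.Finite → F.Finite →
      (∀ u ∈ E, ∀ v ∈ F, edistZ2 u v > g) → AdmitsGluing X E F := by
  intro E F hE hF hEF
  intro x hx y hy
  have hg0 : (0 : ℝ) ≤ g := by linarith
  have hEsub : E ⊆ GluingAux.Fat E g := GluingAux.subset_fat hg0
  have hFsub : F ⊆ GluingAux.Fat F g := GluingAux.subset_fat hg0
  have hglue := hyp (GluingAux.Fat E g) (GluingAux.Fat F g)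
    (GluingAux.fat_finite hE g) (GluingAux.fat_finite hF g)
    (GluingAux.fat_apart hg hEF)
    (GluingAux.sep_fat E hg) (GluingAux.sep_fat F hg)
  obtain ⟨z, hz, hzE, hzF⟩ := hglue x hx y hy
  exact ⟨z, hz, fun u hu => hzE u (hEsub hu), fun u hu => hzF u (hFsub hu)⟩
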